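/- Let n ≥ 1 and consider W = ℝ^{4n} with coordinates (q, p, ξ_q, ξ_p) ∈ ℝⁿ×ℝⁿ×ℝⁿ×ℝⁿ, equipped with the constant Poisson bracket determined by {q_i, ξ_{q,j}} = δ_{ij}, {p_i, ξ_{p,j}} = δ_{ij}, all other coordinate brackets being zero. Let U = ℝ^{2n} with coordinates (q,p) carry the constant Poisson bracket determined by {q_i, p_j} = δ_{ij}. Then the maps α(q,p,ξ_q,ξ_p) = (q − ξ_p/2, p + ξ_q/2) and β(q,p,ξ_q,ξ_p) = (q + ξ_p/2, p − ξ_q/2) from W to U satisfy: α is a Poisson map, β is an anti-Poisson map, and {F∘α, G∘β}_W = 0 for all smooth F, G: U → ℝ. -/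

import Mathlib

open scoped BigOperators

section

variable {n : ℕ}

/-- Phase space `ℝ^{2n}` with coordinates `(q,p)`. -/
abbrev Phase (n : ℕ) := (Fin n → ℝ) × (Fin n → ℝ)

/-- Doubled space `ℝ^{4n}` with coordinates `(q,p,ξ_q,ξ_p)`. -/
abbrev Doubled (n : ℕ) := ((Fin n → ℝ) × (Fin n → ℝ)) × ((Fin n → ℝ) × (Fin n → ℝ))

/-- Canonical Poisson bracket on `ℝ^{2n}`, with `{q_i, p_j} = δ_{ij}`. -/
noncomputable def brU (F G : Phase n → ℝ) (z : Phase n) : ℝ :=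
  ∑ i, (fderiv ℝ F z (Pi.single i 1, 0) * fderiv ℝ G z (0, Pi.single i 1)
      - fderiv ℝ F z (0, Pi.single i 1) * fderiv ℝ G z (Pi.single i 1, 0))

/-- Constant Poisson bracket on `ℝ^{4n}` determined by `{q_i, ξ_{q,j}} = δ_{ij}`,
`{p_i, ξ_{p,j}} = δ_{ij}`, all other coordinate brackets vanishing. -/
noncomputable def brW (F G : Doubled n → ℝ) (w : Doubled n) : ℝ :=
  ∑ i, (fderiv ℝ F w ((Pi.single i 1, 0), (0, 0))
          * fderiv ℝ G w ((0, 0), (Pi.single i 1, 0))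
      - fderiv ℝ F w ((0, 0), (Pi.single i 1, 0))
          * fderiv ℝ G w ((Pi.single i 1, 0), (0, 0)))
  + ∑ i, (fderiv ℝ F w ((0, Pi.single i 1), (0, 0))
          * fderiv ℝ G w ((0, 0), (0, Pi.single i 1))
      - fderiv ℝ F w ((0, 0), (0, Pi.single i 1))
          * fderiv ℝ G w ((0, Pi.single i 1), (0, 0)))

/-- Source map `α(q,p,ξ_q,ξ_p) = (q − ξ_p/2, p + ξ_q/2)`. -/
noncomputable def srcMap (w : Doubled n) : Phase n :=
  (w.1.1 - (1 / 2 : ℝ) • w.2.2, w.1.2 + (1 / 2 : ℝ) • w.2.1)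

/-- Target map `β(q,p,ξ_q,ξ_p) = (q + ξ_p/2, p − ξ_q/2)`. -/
noncomputable def tgtMap (w : Doubled n) : Phase n :=
  (w.1.1 + (1 / 2 : ℝ) • w.2.2, w.1.2 - (1 / 2 : ℝ) • w.2.1)

end

section Aux

variable {n : ℕ}

noncomputable def srcCLM (n : ℕ) : Doubled n →L[ℝ] Phase n :=
  LinearMap.toContinuousLinearMap
    { toFun := srcMap
      map_add' := by
        intro x y
        simp only [srcMap, Prod.mk_add_mk, Prod.fst_add, Prod.snd_add, smul_add]
        refine Prod.ext ?_ ?_ <;> module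
      map_smul' := by
        intro c x
        simp only [srcMap, Prod.smul_mk, Prod.smul_fst, Prod.smul_snd, RingHom.id_apply]
        refine Prod.ext ?_ ?_ <;> module }

noncomputable def tgtCLM (n : ℕ) : Doubled n →L[ℝ] Phase n :=
  LinearMap.toContinuousLinearMap
    { toFun := tgtMap
      map_add' := by
        intro x y
        simp only [tgtMap, Prod.mk_add_mk, Prod.fst_add, Prod.snd_add, smul_add]
        refine Prod.ext ?_ ?_ <;> module
      map_smul' := by
        intro c x
        simp only [tgtMap, Prod.smul_mk, Prod.smul_fst, Prod.smul_snd, RingHom.id_apply]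
        refine Prod.ext ?_ ?_ <;> module }

lemma srcCLM_apply (v : Doubled n) : srcCLM n v = srcMap v := rfl
lemma tgtCLM_apply (v : Doubled n) : tgtCLM n v = tgtMap v := rfl

lemma fderiv_comp_src (F : Phase n → ℝ) (hF : ContDiff ℝ (⊤ : ℕ∞) F) (w : Doubled n)
    (v : Doubled n) :
    fderiv ℝ (F ∘ srcMap) w v = fderiv ℝ F (srcMap w) (srcMap v) := by
  have h1 : srcMap (n := n) = ⇑(srcCLM n) := rfl
  rw [h1, fderiv_comp w ((hF.differentiable (by simp)).differentiableAt)
    (srcCLM n).differentiableAt, (srcCLM n).fderiv]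
  rfl

lemma fderiv_comp_tgt (F : Phase n → ℝ) (hF : ContDiff ℝ (⊤ : ℕ∞) F) (w : Doubled n)
    (v : Doubled n) :
    fderiv ℝ (F ∘ tgtMap) w v = fderiv ℝ F (tgtMap w) (tgtMap v) := by
  have h1 : tgtMap (n := n) = ⇑(tgtCLM n) := rfl
  rw [h1, fderiv_comp w ((hF.differentiable (by simp)).differentiableAt)
    (tgtCLM n).differentiableAt, (tgtCLM n).fderiv]
  rfl

end Aux

section Aux2
variable {n : ℕ}

lemma ev_half_snd (L : Phase n →L[ℝ] ℝ) (x : Fin n → ℝ) :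
    L (0, (1/2:ℝ) • x) = (1/2:ℝ) * L (0, x) := by
  have h : ((0 : Fin n → ℝ), (1/2:ℝ) • x) = (1/2:ℝ) • ((0 : Fin n → ℝ), x) := by
    simp [Prod.smul_mk]
  rw [h, L.map_smul, smul_eq_mul]

lemma ev_half_fst (L : Phase n →L[ℝ] ℝ) (x : Fin n → ℝ) :
    L ((1/2:ℝ) • x, 0) = (1/2:ℝ) * L (x, 0) := by
  have h : ((1/2:ℝ) • x, (0 : Fin n → ℝ)) = (1/2:ℝ) • (x, (0 : Fin n → ℝ)) := by
    simp [Prod.smul_mk]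
  rw [h, L.map_smul, smul_eq_mul]

lemma ev_neg_half_fst (L : Phase n →L[ℝ] ℝ) (x : Fin n → ℝ) :
    L (-((1/2:ℝ) • x), 0) = -((1/2:ℝ) * L (x, 0)) := by
  have h : (-((1/2:ℝ) • x), (0 : Fin n → ℝ)) = (-(1/2:ℝ)) • (x, (0 : Fin n → ℝ)) := by
    simp [Prod.smul_mk]
  rw [h, L.map_smul, smul_eq_mul]; ring

lemma ev_neg_half_snd (L : Phase n →L[ℝ] ℝ) (x : Fin n → ℝ) :
    L (0, -((1/2:ℝ) • x)) = -((1/2:ℝ) * L (0, x)) := by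
  have h : ((0 : Fin n → ℝ), -((1/2:ℝ) • x)) = (-(1/2:ℝ)) • ((0 : Fin n → ℝ), x) := by
    simp [Prod.smul_mk]
  rw [h, L.map_smul, smul_eq_mul]; ring

end Aux2

/-- The maps `α(q,p,ξ_q,ξ_p) = (q − ξ_p/2, p + ξ_q/2)` and
`β(q,p,ξ_q,ξ_p) = (q + ξ_p/2, p − ξ_q/2)` from `ℝ^{4n}` (with the bracket
`{q_i,ξ_{q,j}} = {p_i,ξ_{p,j}} = δ_{ij}`) to `ℝ^{2n}` (with the canonical bracket
`{q_i,p_j} = δ_{ij}`) are respectively a Poisson and an anti-Poisson map, and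
their pullbacks Poisson-commute. -/
theorem symplectic_birealisation
    {n : ℕ} (hn : 1 ≤ n) :
    ∀ F G : Phase n → ℝ,
      ContDiff ℝ (⊤ : ℕ∞) F → ContDiff ℝ (⊤ : ℕ∞) G →
      ∀ w : Doubled n,
        brW (F ∘ srcMap) (G ∘ srcMap) w = brU F G (srcMap w) ∧
        brW (F ∘ tgtMap) (G ∘ tgtMap) w = -brU F G (tgtMap w) ∧
        brW (F ∘ srcMap) (G ∘ tgtMap) w = 0 := by
  intro F G hF hG w
  refine ⟨?_, ?_, ?_⟩
  · simp only [brW, brU, Function.comp,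
      fderiv_comp_src F hF, fderiv_comp_src G hG, srcMap,
      smul_zero, sub_zero, add_zero, zero_add, zero_sub,
      ev_half_snd, ev_half_fst, ev_neg_half_fst, ev_neg_half_snd]
    rw [← Finset.sum_add_distrib]
    refine Finset.sum_congr rfl fun i _ => ?_
    ring
  · simp only [brW, brU, Function.comp,
      fderiv_comp_tgt F hF, fderiv_comp_tgt G hG, tgtMap,
      smul_zero, sub_zero, add_zero, zero_add, zero_sub,
      ev_half_snd, ev_half_fst, ev_neg_half_fst, ev_neg_half_snd]
    rw [← Finset.sum_add_distrib, ← Finset.sum_neg_distrib]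
    refine Finset.sum_congr rfl fun i _ => ?_
    ring
  · simp only [brW, Function.comp,
      fderiv_comp_src F hF, fderiv_comp_tgt G hG, srcMap, tgtMap,
      smul_zero, sub_zero, add_zero, zero_add, zero_sub,
      ev_half_snd, ev_half_fst, ev_neg_half_fst, ev_neg_half_snd]
    rw [← Finset.sum_add_distrib]
    refine Finset.sum_eq_zero fun i _ => ?_
    ring
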